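/- arXiv:2605.30110 — 6 statements merged into one kernel-verified Lean document; each statement's English description precedes it below -/
import Mathlib

section
/- Let A be a bounded normal operator, Γ a simple closed curve not intersecting σ(A), P = (1/2πi)∮_Γ (z − A)^{-1} dz the Riesz spectral projector, and for a bounded operator X define X̃ = (1/2πi)∮_Γ (z−A)^{-1} X (z−A)^{-1} dz. Then [A, X̃] = [P, X]. -/
open scoped Matrix.Norms.L2Operator ComplexOrder
open Complex Matrix

/-- Let `A` be a normal matrix and `γ : [0,1] → ℂ` a (parametrised) closed contour,
with derivative `γ'`, that does not meet the spectrum of `A`.  Let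
`P = (1/2πi)∮_Γ (z − A)⁻¹ dz` be the Riesz spectral projector and
`X̃ = (1/2πi)∮_Γ (z−A)⁻¹ X (z−A)⁻¹ dz` the "twiddle" of a matrix `X`.
Then `[A, X̃] = [P, X]`. -/
theorem statement1
    {n : ℕ} (A X : Matrix (Fin n) (Fin n) ℂ)
    (hA_normal : A * Aᴴ = Aᴴ * A)
    (γ γ' : ℝ → ℂ)
    (hγ : ∀ t, HasDerivAt γ (γ' t) t)
    (hγ'cont : Continuous γ')
    (hclosed : γ 0 = γ 1)
    (hspec : ∀ t, γ t ∉ spectrum ℂ A)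
    (P Xt : Matrix (Fin n) (Fin n) ℂ)
    (hP : P = (2 * Real.pi * I)⁻¹ •
      ∫ t in (0:ℝ)..1, γ' t • ((γ t) • (1 : Matrix (Fin n) (Fin n) ℂ) - A)⁻¹)
    (hXt : Xt = (2 * Real.pi * I)⁻¹ •
      ∫ t in (0:ℝ)..1, γ' t •
        (((γ t) • (1 : Matrix (Fin n) (Fin n) ℂ) - A)⁻¹ * X *
          ((γ t) • (1 : Matrix (Fin n) (Fin n) ℂ) - A)⁻¹)) :
    A * Xt - Xt * A = P * X - X * P := by
  set M : ℝ → Matrix (Fin n) (Fin n) ℂ := fun t => (γ t) • 1 - A with hM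
  set R : ℝ → Matrix (Fin n) (Fin n) ℂ := fun t => (M t)⁻¹ with hR
  -- invertibility
  have hUnit : ∀ t, IsUnit (M t) := by
    intro t
    have := (spectrum.notMem_iff).mp (hspec t)
    rwa [Algebra.algebraMap_eq_smul_one] at this
  have hUnitDet : ∀ t, IsUnit (M t).det := fun t => (Matrix.isUnit_iff_isUnit_det _).mp (hUnit t)
  have hMR : ∀ t, M t * R t = 1 := fun t => Matrix.mul_nonsing_inv _ (hUnitDet t)
  have hRM : ∀ t, R t * M t = 1 := fun t => Matrix.nonsing_inv_mul _ (hUnitDet t)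
  -- key identities for A * R and R * A
  have hAR : ∀ t, A * R t = γ t • R t - 1 := by
    intro t
    have h := hMR t
    rw [hM] at h
    simp only [sub_mul, smul_mul_assoc, one_mul] at h
    linear_combination (norm := module) -h
  have hRA : ∀ t, R t * A = γ t • R t - 1 := by
    intro t
    have h := hRM t
    rw [hM] at h
    simp only [mul_sub, mul_smul_comm, mul_one] at h
    linear_combination (norm := module) -h
  -- continuity
  have hγc : Continuous γ := continuous_iff_continuousAt.mpr fun t => (hγ t).continuousAt
  have hMc : Continuous M := (hγc.smul continuous_const).sub continuous_const
  have hRc : Continuous R := by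
    have heq : R = fun t => ((M t).det)⁻¹ • (M t).adjugate := by
      funext t
      show (M t)⁻¹ = _
      rw [Matrix.inv_def, Ring.inverse_eq_inv]
    rw [heq]
    exact (hMc.matrix_det.inv₀ fun t => (hUnitDet t).ne_zero).smul hMc.matrix_adjugate
  -- integrands and integrability
  set f : ℝ → Matrix (Fin n) (Fin n) ℂ := fun t => γ' t • (R t * X * R t) with hf
  set g : ℝ → Matrix (Fin n) (Fin n) ℂ := fun t => γ' t • R t with hg
  have hfc : Continuous f := hγ'cont.smul ((hRc.mul continuous_const).mul hRc)
  have hgc : Continuous g := hγ'cont.smul hRc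
  have hfi : IntervalIntegrable f MeasureTheory.volume 0 1 := hfc.intervalIntegrable _ _
  have hgi : IntervalIntegrable g MeasureTheory.volume 0 1 := hgc.intervalIntegrable _ _
  -- main pointwise computation
  have key : ∀ t, A * f t - f t * A = (g t * X) - (X * g t) := by
    intro t
    simp only [hf, hg, mul_smul_comm, smul_mul_assoc]
    rw [← smul_sub, ← smul_sub]
    congr 1
    rw [show A * (R t * X * R t) = (A * R t) * (X * R t) by noncomm_ring, hAR t,
        show (R t * X * R t) * A = (R t * X) * (R t * A) by noncomm_ring, hRA t]
    simp only [sub_mul, mul_sub, smul_mul_assoc, mul_smul_comm, one_mul, mul_one, mul_assoc]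
    abel
  -- moving multiplication through integrals
  have hmulL : ∀ (C : Matrix (Fin n) (Fin n) ℂ) (h : ℝ → Matrix (Fin n) (Fin n) ℂ),
      IntervalIntegrable h MeasureTheory.volume 0 1 →
      C * (∫ t in (0:ℝ)..1, h t) = ∫ t in (0:ℝ)..1, C * h t := by
    intro C h hh
    simpa using ((ContinuousLinearMap.mul ℂ (Matrix (Fin n) (Fin n) ℂ) C).intervalIntegral_comp_comm hh).symm
  have hmulR : ∀ (C : Matrix (Fin n) (Fin n) ℂ) (h : ℝ → Matrix (Fin n) (Fin n) ℂ),
      IntervalIntegrable h MeasureTheory.volume 0 1 →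
      (∫ t in (0:ℝ)..1, h t) * C = ∫ t in (0:ℝ)..1, h t * C := by
    intro C h hh
    simpa using (((ContinuousLinearMap.mul ℂ (Matrix (Fin n) (Fin n) ℂ)).flip C).intervalIntegral_comp_comm hh).symm
  have hAfi : IntervalIntegrable (fun t => A * f t) MeasureTheory.volume 0 1 :=
    (continuous_const.mul hfc).intervalIntegrable _ _
  have hfAi : IntervalIntegrable (fun t => f t * A) MeasureTheory.volume 0 1 :=
    (hfc.mul continuous_const).intervalIntegrable _ _
  have hgXi : IntervalIntegrable (fun t => g t * X) MeasureTheory.volume 0 1 :=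
    (hgc.mul continuous_const).intervalIntegrable _ _
  have hXgi : IntervalIntegrable (fun t => X * g t) MeasureTheory.volume 0 1 :=
    (continuous_const.mul hgc).intervalIntegrable _ _
  calc A * Xt - Xt * A
      = (2 * Real.pi * I)⁻¹ • ((∫ t in (0:ℝ)..1, A * f t) - ∫ t in (0:ℝ)..1, f t * A) := by
        rw [hXt, mul_smul_comm, smul_mul_assoc, ← smul_sub, hmulL A f hfi, hmulR A f hfi]
    _ = (2 * Real.pi * I)⁻¹ • ((∫ t in (0:ℝ)..1, g t * X) - ∫ t in (0:ℝ)..1, X * g t) := by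
        rw [← intervalIntegral.integral_sub hAfi hfAi, ← intervalIntegral.integral_sub hgXi hXgi]
        congr 1
        exact intervalIntegral.integral_congr fun t _ => key t
    _ = P * X - X * P := by
        rw [hP, smul_mul_assoc, mul_smul_comm, ← smul_sub, hmulR X g hgi, hmulL X g hgi]
end

section
/- Let A be a normal operator and suppose exactly one eigenvalue ω₀ of A lies inside the contour Γ, with associated spectral projector P. Then for any bounded X, the twiddled operator satisfies X̃ = (ω₀·1 − A)⁺ X P + P X (ω₀·1 − A)⁺, where ⁺ denotes the Moore–Penrose pseudoinverse. -/
open scoped Matrix.Norms.L2Operator ComplexOrder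
open Matrix

/-- Let `A` be normal with a single eigenvalue `ω₀` inside the contour, `P` the
orthogonal projector onto the eigenspace of `ω₀`, and `X̃` the (unique)
off-diagonal solution of `[A, X̃] = [P, X]`.  Let `B = (ω₀·1 − A)⁺` be the
Moore–Penrose pseudoinverse, characterised here by
`B (ω₀·1 − A) = (ω₀·1 − A) B = 1 − P` and `B P = P B = 0`.
Then `X̃ = (ω₀·1 − A)⁺ X P + P X (ω₀·1 − A)⁺`. -/
theorem statement4
    {n : ℕ} (A P X Xt B : Matrix (Fin n) (Fin n) ℂ) (ω₀ : ℂ)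
    (hA_normal : A * Aᴴ = Aᴴ * A)
    (hω₀ : ω₀ ∈ spectrum ℂ A)
    -- P is the orthogonal projector onto the eigenspace of ω₀
    (hP_proj : P * P = P) (hP_herm : P.IsHermitian)
    (hAP : A * P = ω₀ • P)
    (hP_full : ∀ v : Fin n → ℂ, A.mulVec v = ω₀ • v → P.mulVec v = v)
    -- X̃ is the off-diagonal solution of [A, X̃] = [P, X]
    (hXt_off : P * Xt * P = 0 ∧ (1 - P) * Xt * (1 - P) = 0)
    (hXt : A * Xt - Xt * A = P * X - X * P)
    -- B is the Moore–Penrose pseudoinverse of (ω₀·1 − A)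
    (hB₁ : B * (ω₀ • (1 : Matrix (Fin n) (Fin n) ℂ) - A) = 1 - P)
    (hB₂ : (ω₀ • (1 : Matrix (Fin n) (Fin n) ℂ) - A) * B = 1 - P)
    (hB₃ : B * P = 0) (hB₄ : P * B = 0) :
    Xt = B * X * P + P * X * B := by

  set N : Matrix (Fin n) (Fin n) ℂ := ω₀ • (1 : Matrix (Fin n) (Fin n) ℂ) - A with hNdef
  -- N is normal
  have hN : N * Nᴴ = Nᴴ * N := by
    simp only [hNdef, Matrix.conjTranspose_sub, Matrix.conjTranspose_smul,
      Matrix.conjTranspose_one, sub_mul, mul_sub, Matrix.smul_mul, Matrix.mul_smul,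
      one_mul, mul_one, hA_normal, smul_smul, mul_comm]
    module
  have hNP : N * P = 0 := by
    rw [hNdef, sub_mul, Matrix.smul_mul, one_mul, hAP, sub_self]
  have hNHP : Nᴴ * P = 0 := by
    rw [← Matrix.conjTranspose_mul_self_eq_zero (A := Nᴴ * P)]
    calc (Nᴴ * P)ᴴ * (Nᴴ * P) = P * (N * Nᴴ) * P := by
          simp only [Matrix.conjTranspose_mul, Matrix.conjTranspose_conjTranspose,
            hP_herm.eq, Matrix.mul_assoc]
      _ = P * (Nᴴ * (N * P)) := by rw [hN, Matrix.mul_assoc, Matrix.mul_assoc]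
      _ = 0 := by rw [hNP, Matrix.mul_zero, Matrix.mul_zero]
  have hPN : P * N = 0 := by
    have h := congrArg Matrix.conjTranspose hNHP
    simpa [Matrix.conjTranspose_mul, hP_herm.eq] using h
  have hPA : P * A = ω₀ • P := by
    rw [hNdef, mul_sub, Matrix.mul_smul, mul_one] at hPN
    exact (sub_eq_zero.mp hPN).symm
  have hAB : A * B = ω₀ • B - (1 - P) := by
    rw [sub_mul, Matrix.smul_mul, one_mul] at hB₂
    rw [← hB₂]; abel
  have hBA : B * A = ω₀ • B - (1 - P) := by
    rw [mul_sub, Matrix.mul_smul, mul_one] at hB₁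
    rw [← hB₁]; abel
  -- block computations
  have e1 : P * (A * Xt - Xt * A) * B = P * Xt := by
    rw [mul_sub, sub_mul, ← Matrix.mul_assoc P A Xt, hPA, Matrix.smul_mul, Matrix.smul_mul,
      ← Matrix.mul_assoc P Xt A, Matrix.mul_assoc (P * Xt) A B, hAB, mul_sub,
      Matrix.mul_smul, mul_sub, mul_one, hXt_off.1]
    abel
  have e2 : P * (P * X - X * P) * B = P * X * B := by
    rw [mul_sub, sub_mul, ← Matrix.mul_assoc P P X, hP_proj, ← Matrix.mul_assoc P X P,
      Matrix.mul_assoc (P * X) P B, hB₄, Matrix.mul_zero, sub_zero]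
  have e3 : B * (A * Xt - Xt * A) * P = -(Xt * P) := by
    rw [mul_sub, sub_mul, ← Matrix.mul_assoc B A Xt, hBA, Matrix.sub_mul, Matrix.sub_mul,
      Matrix.smul_mul, Matrix.smul_mul, sub_mul, one_mul, sub_mul, hXt_off.1,
      ← Matrix.mul_assoc B Xt A, Matrix.mul_assoc (B * Xt) A P, hAP, Matrix.mul_smul]
    abel
  have e4 : B * (P * X - X * P) * P = -(B * X * P) := by
    rw [mul_sub, sub_mul, ← Matrix.mul_assoc B P X, hB₃, Matrix.zero_mul, Matrix.zero_mul,
      ← Matrix.mul_assoc B X P, Matrix.mul_assoc (B * X) P P, hP_proj]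
    abel
  have hPXt : P * Xt = P * X * B := by rw [← e1, hXt]; exact e2
  have hXtP : Xt * P = B * X * P := by
    have h : -(Xt * P) = -(B * X * P) := by rw [← e3, hXt]; exact e4
    exact neg_inj.mp h
  have h2 := hXt_off.2
  simp only [sub_mul, mul_sub, one_mul, mul_one] at h2
  rw [hXt_off.1] at h2
  calc Xt = (Xt - P * Xt - (Xt * P - 0)) + (P * Xt + Xt * P) := by abel
    _ = P * Xt + Xt * P := by rw [h2, zero_add]
    _ = B * X * P + P * X * B := by rw [hPXt, hXtP]; abel
end

section
/- Let H be a Hermitian operator with ‖H‖ ≤ 1 and define the qubitised unitary U = |y−⟩⟨y−| ⊗ (H + i√(1−H²)) + |y+⟩⟨y+| ⊗ (H − i√(1−H²)), where |y±⟩ = (1/√2)(1, ±i)ᵀ. Then U is unitary, its spectrum is { α ± i√(1−α²) : α ∈ σ(H) }, and for any α₀, α₁ ∈ [−1,1], |(α₀ + i√(1−α₀²)) − (α₁ + i√(1−α₁²))| ≥ |α₀ − α₁| (and similarly with both minus signs); hence the spectral gap of U is at least that of H. -/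
open scoped Matrix.Norms.L2Operator ComplexOrder Kronecker
open Matrix Complex

noncomputable def Vm : Matrix (Fin 2) (Fin 2) ℂ :=
  !![1/(Real.sqrt 2:ℂ), 1/Real.sqrt 2; -I/Real.sqrt 2, I/Real.sqrt 2]

lemma sqrt2_inv_sq : (((Real.sqrt 2:ℝ):ℂ))⁻¹ ^ 2 = (2:ℂ)⁻¹ := by
  rw [inv_pow, ← Complex.ofReal_pow, Real.sq_sqrt (by norm_num)]; norm_num

lemma VmU : Vm * Vmᴴ = 1 := by
  have h := sqrt2_inv_sq
  ext i j
  fin_cases i <;> fin_cases j <;>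
    · simp [Vm, mul_apply, Fin.sum_univ_two, conjTranspose_apply]
      try ring
      try { ring_nf; simp [h, Complex.I_sq]; try ring_nf; try norm_num }
      try { simp only [h, Complex.I_sq]; norm_num }

lemma VmE0 : vecMulVec (![1/(Real.sqrt 2 : ℂ), -I/Real.sqrt 2]) (star (![1/(Real.sqrt 2 : ℂ), -I/Real.sqrt 2]))
    = Vm * diagonal ![1,0] * Vmᴴ := by
  have : (diagonal ![1,0] : Matrix (Fin 2) (Fin 2) ℂ) = !![(1:ℂ),0;0,0] := by
    ext i j; fin_cases i <;> fin_cases j <;> simp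
  rw [this]
  ext i j
  fin_cases i <;> fin_cases j <;>
    simp [Vm, mul_apply, Fin.sum_univ_two, conjTranspose_apply, vecMulVec_apply]

lemma VmE1 : vecMulVec (![1/(Real.sqrt 2 : ℂ), I/Real.sqrt 2]) (star (![1/(Real.sqrt 2 : ℂ), I/Real.sqrt 2]))
    = Vm * diagonal ![0,1] * Vmᴴ := by
  have : (diagonal ![0,1] : Matrix (Fin 2) (Fin 2) ℂ) = !![(0:ℂ),0;0,1] := by
    ext i j; fin_cases i <;> fin_cases j <;> simp
  rw [this]
  ext i j
  fin_cases i <;> fin_cases j <;>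
    simp [Vm, mul_apply, Fin.sum_univ_two, conjTranspose_apply, vecMulVec_apply]

lemma kron_conjTranspose {m n : Type*} [Fintype m] [Fintype n]
    (A : Matrix m m ℂ) (B : Matrix n n ℂ) : (A ⊗ₖ B)ᴴ = Aᴴ ⊗ₖ Bᴴ := by
  ext ⟨i,j⟩ ⟨k,l⟩
  simp [conjTranspose_apply]

/-- qubitisation.
For Hermitian `H` with `‖H‖ ≤ 1` and `S = √(1 − H²)` (the positive semidefinite
square root), the qubitised operator
`U = |y−⟩⟨y−| ⊗ (H + iS) + |y+⟩⟨y+| ⊗ (H − iS)` is unitary, its spectrum is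
`{α ± i√(1−α²) : α ∈ σ(H)}`, and the eigenvalue distances can only increase:
`|(α₀ ± i√(1−α₀²)) − (α₁ ± i√(1−α₁²))| ≥ |α₀ − α₁|` for `α₀, α₁ ∈ [−1,1]`. -/
theorem statement11 {n : ℕ} (H S : Matrix (Fin n) (Fin n) ℂ)
    (hH : H.IsHermitian) (hHnorm : ‖H‖ ≤ 1)
    (hS : S.PosSemidef) (hS2 : S * S = 1 - H * H)
    (U : Matrix (Fin 2 × Fin n) (Fin 2 × Fin n) ℂ)
    (hU : U =
      (vecMulVec ((![1/(Real.sqrt 2 : ℂ), -I/Real.sqrt 2])) (star (![1/(Real.sqrt 2 : ℂ), -I/Real.sqrt 2])))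
        ⊗ₖ (H + I • S) +
      (vecMulVec ((![1/(Real.sqrt 2 : ℂ), I/Real.sqrt 2])) (star (![1/(Real.sqrt 2 : ℂ), I/Real.sqrt 2])))
        ⊗ₖ (H - I • S)) :
    U ∈ Matrix.unitaryGroup (Fin 2 × Fin n) ℂ ∧
    spectrum ℂ U = {z : ℂ | ∃ α : ℝ, (α : ℂ) ∈ spectrum ℂ H ∧
      (z = α + I * Real.sqrt (1 - α ^ 2) ∨ z = α - I * Real.sqrt (1 - α ^ 2))} ∧
    (∀ α₀ ∈ Set.Icc (-(1:ℝ)) 1, ∀ α₁ ∈ Set.Icc (-(1:ℝ)) 1,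
      |α₀ - α₁| ≤ ‖(α₀ + I * Real.sqrt (1 - α₀ ^ 2)) -
        (α₁ + I * Real.sqrt (1 - α₁ ^ 2))‖ ∧
      |α₀ - α₁| ≤ ‖(α₀ - I * Real.sqrt (1 - α₀ ^ 2)) -
        (α₁ - I * Real.sqrt (1 - α₁ ^ 2))‖) := by
  classical
  set d : Fin n → ℝ := hH.eigenvalues with hd
  set W : Matrix (Fin n) (Fin n) ℂ := (hH.eigenvectorUnitary : Matrix (Fin n) (Fin n) ℂ) with hWdef
  have hW : W ∈ Matrix.unitaryGroup (Fin n) ℂ := (hH.eigenvectorUnitary).2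
  have hW1 : W * star W = 1 := Matrix.mem_unitaryGroup_iff.mp hW
  have hW1' : star W * W = 1 := Matrix.mem_unitaryGroup_iff'.mp hW
  set Dm : Matrix (Fin n) (Fin n) ℂ := diagonal (fun j => (d j : ℂ)) with hDm
  have hspec : H = W * Dm * star W := hH.spectral_theorem
  have key : ∀ X : Matrix (Fin n) (Fin n) ℂ, star W * (W * X * star W) * W = X := by
    intro X
    calc star W * (W * X * star W) * W = (star W * W) * X * (star W * W) := by
          simp only [Matrix.mul_assoc]
      _ = X := by rw [hW1', one_mul, mul_one]
  have kmul : ∀ X Y : Matrix (Fin n) (Fin n) ℂ,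
      (W * X * star W) * (W * Y * star W) = W * (X * Y) * star W := by
    intro X Y
    have h1 : (W * X * star W) * (W * Y * star W) = W * X * (star W * W) * Y * star W := by
      simp only [Matrix.mul_assoc]
    rw [h1, hW1', mul_one, Matrix.mul_assoc W X Y]
  -- 1 - H*H is conjugate of 1 - Dm*Dm
  have hHH : 1 - H * H = W * (1 - Dm * Dm) * star W := by
    rw [hspec, kmul, Matrix.mul_sub, Matrix.sub_mul, mul_one, hW1]
  -- eigenvalue bound
  have hP : (1 - H * H).PosSemidef := by
    rw [← hS2]
    have := hS.pow 2
    rwa [pow_two] at this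
  have hPD : (1 - Dm * Dm).PosSemidef := by
    have h2 := hP.mul_mul_conjTranspose_same (star W)
    rwa [Matrix.star_eq_conjTranspose W, Matrix.conjTranspose_conjTranspose,
      ← Matrix.star_eq_conjTranspose W, hHH, key] at h2
  have hdle : ∀ j, d j ^ 2 ≤ 1 := by
    intro j
    have h1 : (1 : Matrix (Fin n) (Fin n) ℂ) - Dm * Dm
        = diagonal (fun j => ((1 - d j ^ 2 : ℝ) : ℂ)) := by
      rw [hDm, diagonal_mul_diagonal, ← diagonal_one, diagonal_sub]
      congr 1; funext j; push_cast; ring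
    rw [h1] at hPD
    have h2 := Matrix.posSemidef_diagonal_iff.mp hPD j
    have h3 : (0:ℝ) ≤ 1 - d j ^ 2 := by exact_mod_cast h2
    linarith
  set s : Fin n → ℝ := fun j => Real.sqrt (1 - d j ^ 2) with hs
  have hs_sq : ∀ j, s j ^ 2 = 1 - d j ^ 2 := fun j => Real.sq_sqrt (by linarith [hdle j])
  have hs_nonneg : ∀ j, 0 ≤ s j := fun j => Real.sqrt_nonneg _
  set T : Matrix (Fin n) (Fin n) ℂ := diagonal (fun j => (s j : ℂ)) with hTdef
  -- S is the conjugated diagonal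
  have hT : S = W * T * star W := by
    have hWTW : (W * T * star W).PosSemidef := by
      have hTpsd : T.PosSemidef := Matrix.posSemidef_diagonal_iff.mpr fun j => by
        exact_mod_cast hs_nonneg j
      have := hTpsd.mul_mul_conjTranspose_same W
      rwa [← Matrix.star_eq_conjTranspose W] at this
    have hTT : T * T = 1 - Dm * Dm := by
      rw [hTdef, hDm, diagonal_mul_diagonal, diagonal_mul_diagonal, ← diagonal_one,
        diagonal_sub]
      refine congrArg diagonal (funext fun j => ?_)
      have h4 : s j * s j = 1 - d j * d j := by nlinarith [hs_sq j]
      exact_mod_cast h4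
    refine (open scoped MatrixOrder in (CFC.sq_eq_sq_iff S (W * T * star W) hS.nonneg hWTW.nonneg).mp ?_)
    rw [pow_two, pow_two, hS2, kmul, hTT, hHH]
  -- the conjugating unitary and the diagonal form
  set g : Fin 2 × Fin n → ℂ := fun p => (d p.2 : ℂ) + (if p.1 = 0 then I else -I) * s p.2 with hg
  set V2 : Matrix (Fin 2 × Fin n) (Fin 2 × Fin n) ℂ := Vm ⊗ₖ W with hV2
  have hV2U : V2 ∈ Matrix.unitaryGroup (Fin 2 × Fin n) ℂ := by
    rw [Matrix.mem_unitaryGroup_iff, hV2, Matrix.star_eq_conjTranspose, kron_conjTranspose,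
      ← Matrix.mul_kronecker_mul, VmU, ← Matrix.star_eq_conjTranspose W, hW1,
      Matrix.one_kronecker_one]
  have hApm : ∀ c : ℂ, H + c • S = W * diagonal (fun j => (d j : ℂ) + c * s j) * star W := by
    intro c
    rw [hspec, hT, ← Matrix.smul_mul, ← Matrix.mul_smul, ← Matrix.add_mul, ← Matrix.mul_add]
    congr 2
    rw [hDm, hTdef, ← diagonal_smul, diagonal_add]
    refine congrArg diagonal (funext fun j => ?_)
    simp [smul_eq_mul]
  have hUeq : U = V2 * diagonal g * V2ᴴ := by
    have hsub : H - I • S = H + (-I) • S := by rw [sub_eq_add_neg, neg_smul]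
    rw [hU, hApm I, hsub, hApm (-I), VmE0, VmE1, hV2, kron_conjTranspose]
    have hdiag : diagonal g =
        (diagonal ![1,0]) ⊗ₖ (diagonal fun j => (d j:ℂ) + I * s j) +
        (diagonal ![0,1]) ⊗ₖ (diagonal fun j => (d j:ℂ) + (-I) * s j) := by
      rw [Matrix.diagonal_kronecker_diagonal, Matrix.diagonal_kronecker_diagonal, diagonal_add]
      refine congrArg diagonal (funext fun p => ?_)
      obtain ⟨k, j⟩ := p
      fin_cases k <;> simp [hg] <;> ring
    rw [hdiag, Matrix.mul_add, Matrix.add_mul, Matrix.mul_kronecker_mul, Matrix.mul_kronecker_mul,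
      Matrix.mul_kronecker_mul, Matrix.mul_kronecker_mul, ← Matrix.star_eq_conjTranspose W]
  -- unit length of diagonal entries
  have hgunit : ∀ p, g p * star (g p) = 1 := by
    intro p
    have hgp : g p = ((d p.2:ℝ):ℂ) + ((if p.1 = 0 then s p.2 else -(s p.2) : ℝ):ℂ) * I := by
      by_cases h : p.1 = 0 <;> simp [hg, h] <;> push_cast <;> ring
    rw [hgp, RCLike.star_def, Complex.mul_conj, Complex.normSq_add_mul_I]
    have h5 : d p.2 ^ 2 + (if p.1 = 0 then s p.2 else -(s p.2)) ^ 2 = 1 := by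
      split_ifs <;> nlinarith [hs_sq p.2]
    rw [h5, Complex.ofReal_one]
  have hDg : diagonal g ∈ Matrix.unitaryGroup (Fin 2 × Fin n) ℂ := by
    rw [Matrix.mem_unitaryGroup_iff, Matrix.star_eq_conjTranspose, diagonal_conjTranspose,
      diagonal_mul_diagonal, ← diagonal_one]
    exact congrArg diagonal (funext fun p => hgunit p)
  have hUmem : U ∈ Matrix.unitaryGroup (Fin 2 × Fin n) ℂ := by
    rw [hUeq, ← Matrix.star_eq_conjTranspose]
    exact mul_mem (mul_mem hV2U hDg) (Unitary.star_mem hV2U)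
  -- spectra
  have hspecU : spectrum ℂ U = Set.range g := by
    rw [hUeq, ← Matrix.star_eq_conjTranspose V2]
    rw [(Unitary.spectrum_star_right_conjugate (U := ⟨V2, hV2U⟩) :
      spectrum ℂ (V2 * diagonal g * star V2) = _), spectrum_diagonal]
  have hspecH : spectrum ℂ H = Set.range (fun j => (d j : ℂ)) := by
    rw [hspec]
    rw [(Unitary.spectrum_star_right_conjugate (U := ⟨W, hW⟩) :
      spectrum ℂ (W * Dm * star W) = _), hDm, spectrum_diagonal]
  refine ⟨hUmem, ?_, ?_⟩
  · ext z
    simp only [hspecU, Set.mem_range, Set.mem_setOf_eq, hspecH]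
    constructor
    · rintro ⟨⟨k, j⟩, rfl⟩
      refine ⟨d j, ⟨j, rfl⟩, ?_⟩
      by_cases hk : k = 0
      · left; simp [hg, hk, hs]
      · right; simp [hg, hk, hs]; ring
    · rintro ⟨α, ⟨j, hj⟩, (rfl | rfl)⟩
      · have hα : d j = α := by exact_mod_cast hj
        exact ⟨(0, j), by simp [hg, hα, hs]⟩
      · have hα : d j = α := by exact_mod_cast hj
        refine ⟨(1, j), ?_⟩
        have h10 : ((1 : Fin 2) = 0) = False := by simp
        simp [hg, hα, hs, h10]
        ring
  · intro α₀ _ α₁ _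
    constructor
    · have h := Complex.abs_re_le_norm (((α₀:ℂ) + I * Real.sqrt (1 - α₀ ^ 2)) -
        ((α₁:ℂ) + I * Real.sqrt (1 - α₁ ^ 2)))
      simpa using h
    · have h := Complex.abs_re_le_norm (((α₀:ℂ) - I * Real.sqrt (1 - α₀ ^ 2)) -
        ((α₁:ℂ) - I * Real.sqrt (1 - α₁ ^ 2)))
      simpa using h
end

section
/- Let H be a Hermitian operator with ‖H‖ ≤ 1, with a positive lower bound √(1 − ‖H‖²) > 0. If H(s) is a differentiable path of such operators, then ‖ d/ds √(1 − H(s)²) ‖ ≤ ‖H'(s)‖ / √(1 − ‖H(s)‖²). -/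
open scoped Matrix.Norms.L2Operator ComplexOrder
open Matrix

/-- The positive semidefinite square root of a positive semidefinite matrix
(the definition of `Matrix.PosSemidef.sqrt` in the older Mathlib, since removed). -/
noncomputable def Matrix.PosSemidef.sqrt {n : Type*} [Fintype n] {𝕜 : Type*} [RCLike 𝕜]
    [DecidableEq n] {A : Matrix n n 𝕜} (hA : A.PosSemidef) : Matrix n n 𝕜 :=
  hA.1.eigenvectorUnitary.1 * diagonal ((↑) ∘ (√·) ∘ hA.1.eigenvalues) *
  (star hA.1.eigenvectorUnitary : Matrix n n 𝕜)

lemma aux_quad_bound {n : ℕ} (M : Matrix (Fin n) (Fin n) ℂ) (v : EuclideanSpace ℂ (Fin n)) :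
    ‖star (WithLp.equiv 2 _ v) ⬝ᵥ (M *ᵥ WithLp.equiv 2 _ v)‖ ≤ ‖M‖ * ‖v‖ ^ 2 := by
  have h1 : star (WithLp.equiv 2 _ v) ⬝ᵥ (M *ᵥ WithLp.equiv 2 _ v)
      = inner ℂ v ((EuclideanSpace.equiv (Fin n) ℂ).symm (M *ᵥ WithLp.equiv 2 _ v)) :=
    (dotProduct_comm _ _).trans rfl
  rw [h1]
  calc ‖inner ℂ v ((EuclideanSpace.equiv (Fin n) ℂ).symm (M *ᵥ WithLp.equiv 2 _ v))‖
      ≤ ‖v‖ * ‖(EuclideanSpace.equiv (Fin n) ℂ).symm (M *ᵥ WithLp.equiv 2 _ v)‖ :=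
        norm_inner_le_norm _ _
    _ ≤ ‖v‖ * (‖M‖ * ‖v‖) := by
        gcongr
        exact M.l2_opNorm_mulVec v
    _ = ‖M‖ * ‖v‖ ^ 2 := by ring

lemma aux_sqrt_lower {n : ℕ} {M : Matrix (Fin n) (Fin n) ℂ} (hM : M.PosSemidef) {c : ℝ}
    (hc : 0 ≤ c) (h : ∀ i, c ^ 2 ≤ hM.1.eigenvalues i) :
    (hM.sqrt - (c : ℂ) • 1).PosSemidef := by
  have hU : (hM.1.eigenvectorUnitary.1 : Matrix (Fin n) (Fin n) ℂ) *
      (star hM.1.eigenvectorUnitary.1 : Matrix (Fin n) (Fin n) ℂ) = 1 :=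
    Unitary.mul_star_self_of_mem hM.1.eigenvectorUnitary.2
  have hdiag : diagonal (fun i => ((Real.sqrt (hM.1.eigenvalues i) - c : ℝ) : ℂ)) =
      diagonal (RCLike.ofReal ∘ Real.sqrt ∘ hM.1.eigenvalues) - (c : ℂ) • 1 := by
    ext i j
    rcases eq_or_ne i j with rfl | hij
    · push_cast
      simp
    · simp [Matrix.diagonal_apply_ne _ hij, Matrix.one_apply, hij]
  have key : hM.sqrt - (c : ℂ) • 1 =
      hM.1.eigenvectorUnitary.1 *
        diagonal (fun i => ((Real.sqrt (hM.1.eigenvalues i) - c : ℝ) : ℂ)) *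
        (star hM.1.eigenvectorUnitary.1 : Matrix (Fin n) (Fin n) ℂ) := by
    rw [Matrix.PosSemidef.sqrt, hdiag, mul_sub, sub_mul]
    congr 1
    rw [Matrix.mul_smul, Matrix.smul_mul, mul_one, hU]
  rw [key]
  apply Matrix.PosSemidef.mul_mul_conjTranspose_same
  refine posSemidef_diagonal_iff.mpr fun i => ?_
  rw [RCLike.nonneg_iff]
  have : c ≤ Real.sqrt (hM.1.eigenvalues i) :=
    calc c = Real.sqrt (c ^ 2) := by rw [Real.sqrt_sq hc]
    _ ≤ Real.sqrt (hM.1.eigenvalues i) := Real.sqrt_le_sqrt (h i)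
  constructor
  · simpa using this
  · simp

lemma aux_eig_lower {n : ℕ} {H : Matrix (Fin n) (Fin n) ℂ} (hH : H.IsHermitian)
    (h1 : (1 - H * H).PosSemidef) (i : Fin n) :
    1 - ‖H‖ ^ 2 ≤ h1.1.eigenvalues i := by
  set v : EuclideanSpace ℂ (Fin n) := h1.1.eigenvectorBasis i with hv
  have hv1 : ‖v‖ = 1 := h1.1.eigenvectorBasis.orthonormal.1 i
  rw [h1.1.eigenvalues_eq]
  have hsplit : star ⇑v ⬝ᵥ ((1 - H * H) *ᵥ ⇑v)
      = star ⇑v ⬝ᵥ ⇑v - star (H *ᵥ ⇑v) ⬝ᵥ (H *ᵥ ⇑v) := by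
    rw [Matrix.sub_mulVec, Matrix.one_mulVec, dotProduct_sub]
    congr 1
    rw [← Matrix.mulVec_mulVec, Matrix.dotProduct_mulVec, Matrix.star_mulVec, hH.eq]
  rw [hsplit]
  have h2 : star ⇑v ⬝ᵥ ⇑v = (1 : ℂ) := by
    have := (EuclideanSpace.inner_toLp_toLp (𝕜 := ℂ) (⇑v) (⇑v)).trans (dotProduct_comm _ _)
    rw [← this]
    have : WithLp.toLp 2 ⇑v = v := rfl
    rw [this, inner_self_eq_norm_sq_to_K, hv1]
    norm_num
  set w : EuclideanSpace ℂ (Fin n) := WithLp.toLp 2 (H *ᵥ ⇑v) with hw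
  have h3 : star (H *ᵥ ⇑v) ⬝ᵥ (H *ᵥ ⇑v) = ((‖w‖ : ℂ)) ^ 2 := by
    rw [dotProduct_comm, ← EuclideanSpace.inner_toLp_toLp (𝕜 := ℂ), ← hw, inner_self_eq_norm_sq_to_K]
    norm_cast
  have hwle : ‖w‖ ≤ ‖H‖ := by
    have := H.l2_opNorm_mulVec v
    simpa [hv1, hw] using this
  rw [h2, h3]
  simp only [map_sub, RCLike.one_re]
  have : RCLike.re (((‖w‖ : ℂ)) ^ 2) = ‖w‖ ^ 2 := by
    norm_cast
  rw [this]
  have : ‖w‖ ^ 2 ≤ ‖H‖ ^ 2 := by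
    have h0 : (0:ℝ) ≤ ‖w‖ := norm_nonneg _
    nlinarith
  linarith

lemma aux_exists_eig {n : ℕ} (hn : 0 < n) {D : Matrix (Fin n) (Fin n) ℂ}
    (hD : D.IsHermitian) : ∃ i, ‖D‖ = |hD.eigenvalues i| := by
  haveI : Nonempty (Fin n) := Fin.pos_iff_nonempty.mp hn
  haveI : CompleteSpace (Matrix (Fin n) (Fin n) ℂ) := FiniteDimensional.complete ℂ _
  letI : CStarAlgebra (Matrix (Fin n) (Fin n) ℂ) := {}
  have hsa : IsSelfAdjoint D := hD
  have hspec : spectrum ℝ D = Set.range hD.eigenvalues := hD.spectrum_real_eq_range_eigenvalues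
  rcases CStarAlgebra.norm_or_neg_norm_mem_spectrum hsa with h | h
  · rw [hspec] at h
    obtain ⟨i, hi⟩ := h
    exact ⟨i, by rw [hi, abs_of_nonneg (norm_nonneg _)]⟩
  · rw [hspec] at h
    obtain ⟨i, hi⟩ := h
    refine ⟨i, ?_⟩
    rw [hi, abs_neg, abs_of_nonneg (norm_nonneg _)]

lemma aux_deriv_herm {n : ℕ} {f : ℝ → Matrix (Fin n) (Fin n) ℂ} {D : Matrix (Fin n) (Fin n) ℂ}
    {s₀ : ℝ} (hf : ∀ s, (f s).IsHermitian) (hD : HasDerivAt f D s₀) : D.IsHermitian := by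
  let L : Matrix (Fin n) (Fin n) ℂ →ₗ[ℝ] Matrix (Fin n) (Fin n) ℂ :=
    { toFun := fun M => Mᴴ
      map_add' := fun M N => Matrix.conjTranspose_add M N
      map_smul' := fun r M => by
        ext i j
        simp [Matrix.conjTranspose_apply, Complex.real_smul] }
  have hL : HasDerivAt (fun s => (f s)ᴴ) (Dᴴ) s₀ := by
    have := (L.toContinuousLinearMap.hasFDerivAt (x := f s₀)).comp_hasDerivAt s₀ hD
    exact this
  have hfun : (fun s => (f s)ᴴ) = f := funext fun s => (hf s).eq
  rw [hfun] at hL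
  exact hL.unique hD

lemma aux_sqrt_psd {n : ℕ} {M : Matrix (Fin n) (Fin n) ℂ} (hM : M.PosSemidef) :
    hM.sqrt.PosSemidef := by
  unfold Matrix.PosSemidef.sqrt
  apply Matrix.PosSemidef.mul_mul_conjTranspose_same
  refine posSemidef_diagonal_iff.mpr fun i => ?_
  rw [Function.comp_apply, Function.comp_apply, RCLike.nonneg_iff]
  constructor
  · simpa using Real.sqrt_nonneg (hM.1.eigenvalues i)
  · simp

lemma aux_sqrt_mul_self {n : ℕ} {M : Matrix (Fin n) (Fin n) ℂ} (hM : M.PosSemidef) :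
    hM.sqrt * hM.sqrt = M := by
  have hU : (star hM.1.eigenvectorUnitary.1 : Matrix (Fin n) (Fin n) ℂ) *
      (hM.1.eigenvectorUnitary.1 : Matrix (Fin n) (Fin n) ℂ) = 1 :=
    Unitary.star_mul_self_of_mem hM.1.eigenvectorUnitary.2
  have hdiag : diagonal (RCLike.ofReal ∘ Real.sqrt ∘ hM.1.eigenvalues) *
      diagonal (RCLike.ofReal ∘ Real.sqrt ∘ hM.1.eigenvalues) =
      diagonal (RCLike.ofReal ∘ hM.1.eigenvalues : Fin n → ℂ) := by
    rw [diagonal_mul_diagonal]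
    congr 1
    funext i
    simp only [Function.comp_apply]
    rw [← RCLike.ofReal_mul, Real.mul_self_sqrt (hM.eigenvalues_nonneg i)]
  have hspec : M = (hM.1.eigenvectorUnitary.1 : Matrix (Fin n) (Fin n) ℂ) *
      diagonal (RCLike.ofReal ∘ hM.1.eigenvalues : Fin n → ℂ) *
      (star hM.1.eigenvectorUnitary.1 : Matrix (Fin n) (Fin n) ℂ) := by
    conv_lhs => rw [hM.1.spectral_theorem, Unitary.conjStarAlgAut_apply]
  unfold Matrix.PosSemidef.sqrt
  set U : Matrix (Fin n) (Fin n) ℂ := hM.1.eigenvectorUnitary.1 with hUdef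
  set Dg : Matrix (Fin n) (Fin n) ℂ := diagonal (RCLike.ofReal ∘ Real.sqrt ∘ hM.1.eigenvalues)
    with hDg
  have e : U * Dg * star U * (U * Dg * star U) = U * (Dg * (star U * U) * Dg) * star U := by
    simp only [Matrix.mul_assoc]
  rw [e, hU, Matrix.mul_one, hdiag]
  exact hspec.symm

/-- If `H s` is a differentiable path of Hermitian operators with `‖H s‖ < 1`
(so `√(1 − ‖H s‖²) > 0`), and `D` is the derivative at `s₀` of the positive
square root `√(1 − H(s)²)`, then `‖D‖ ≤ ‖H'(s₀)‖ / √(1 − ‖H s₀‖²)`. -/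
theorem statement14 {n : ℕ} (H : ℝ → Matrix (Fin n) (Fin n) ℂ)
    (hH_herm : ∀ s, (H s).IsHermitian)
    (hH_norm : ∀ s, ‖H s‖ < 1)
    (h1 : ∀ s, (1 - H s * H s).PosSemidef)
    (s₀ : ℝ) (H' D : Matrix (Fin n) (Fin n) ℂ)
    (hH' : HasDerivAt H H' s₀)
    (hD : HasDerivAt (fun s => (h1 s).sqrt) D s₀) :
    ‖D‖ ≤ ‖H'‖ / Real.sqrt (1 - ‖H s₀‖ ^ 2) := by
  have hH0 : 0 ≤ ‖H s₀‖ := norm_nonneg _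
  have hlt := hH_norm s₀
  have hc2 : 0 < 1 - ‖H s₀‖ ^ 2 := by nlinarith
  set c : ℝ := Real.sqrt (1 - ‖H s₀‖ ^ 2) with hc
  have hcpos : 0 < c := Real.sqrt_pos.mpr hc2
  rw [le_div_iff₀ hcpos]
  rcases Nat.eq_zero_or_pos n with rfl | hn
  · have hD0 : D = 0 := by ext i j; exact i.elim0
    rw [hD0]
    simp only [norm_zero, zero_mul]
    exact norm_nonneg _
  -- setup
  set A : Matrix (Fin n) (Fin n) ℂ := (h1 s₀).sqrt with hA
  -- D is Hermitian
  have hD_herm : D.IsHermitian :=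
    aux_deriv_herm (fun s => (aux_sqrt_psd (h1 s)).isHermitian) hD
  -- the derivative identity
  have hfun : (fun s => (h1 s).sqrt * (h1 s).sqrt) = fun s => 1 - H s * H s :=
    funext fun s => aux_sqrt_mul_self (h1 s)
  have hderiv1 : HasDerivAt (fun s => (h1 s).sqrt * (h1 s).sqrt) (D * A + A * D) s₀ := hD.mul hD
  have hderiv2 : HasDerivAt (fun s => 1 - H s * H s) (0 - (H' * H s₀ + H s₀ * H')) s₀ :=
    (hasDerivAt_const s₀ 1).sub (hH'.mul hH')
  rw [hfun] at hderiv1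
  have hEq : D * A + A * D = -(H' * H s₀ + H s₀ * H') := by
    have := hderiv1.unique hderiv2
    rw [this, zero_sub]
  -- lower bound on A
  have hAlow : (A - (c : ℂ) • 1).PosSemidef := by
    apply aux_sqrt_lower (h1 s₀) hcpos.le
    intro i
    rw [hc, Real.sq_sqrt hc2.le]
    exact aux_eig_lower (hH_herm s₀) (h1 s₀) i
  -- eigenvector of D realizing the norm
  obtain ⟨i, hi⟩ := aux_exists_eig hn hD_herm
  set μ : ℝ := hD_herm.eigenvalues i with hμ
  set v : EuclideanSpace ℂ (Fin n) := hD_herm.eigenvectorBasis i with hv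
  have hv1 : ‖v‖ = 1 := hD_herm.eigenvectorBasis.orthonormal.1 i
  have hDv : D *ᵥ ⇑v = (μ : ℂ) • ⇑v := by
    have := hD_herm.mulVec_eigenvectorBasis i
    rw [this]
    funext j
    simp [Complex.real_smul, hμ, hv]
  have hvv : star ⇑v ⬝ᵥ ⇑v = (1 : ℂ) := by
    have h := (EuclideanSpace.inner_toLp_toLp (𝕜 := ℂ) (⇑v) (⇑v)).trans (dotProduct_comm _ _)
    rw [← h]
    have h2 : WithLp.toLp 2 ⇑v = v := rfl
    rw [h2, inner_self_eq_norm_sq_to_K, hv1]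
    norm_num
  set q : ℂ := star ⇑v ⬝ᵥ (A *ᵥ ⇑v) with hq
  -- real part of q is at least c
  have hqre : c ≤ q.re := by
    have h0 := hAlow.re_dotProduct_nonneg ⇑v
    have hexp : star ⇑v ⬝ᵥ ((A - (c : ℂ) • 1) *ᵥ ⇑v) = q - (c : ℂ) := by
      rw [Matrix.sub_mulVec, dotProduct_sub, Matrix.smul_mulVec, Matrix.one_mulVec,
        dotProduct_smul, hvv]
      simp [hq]
    rw [hexp] at h0
    simpa using h0
  -- compute the quadratic form of the derivative identity
  have hkey : star ⇑v ⬝ᵥ ((D * A + A * D) *ᵥ ⇑v) = 2 * (μ : ℂ) * q := by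
    rw [Matrix.add_mulVec, dotProduct_add]
    have hAD : star ⇑v ⬝ᵥ ((A * D) *ᵥ ⇑v) = (μ : ℂ) * q := by
      rw [← Matrix.mulVec_mulVec, hDv, Matrix.mulVec_smul, dotProduct_smul]
      simp [hq]
    have hDA : star ⇑v ⬝ᵥ ((D * A) *ᵥ ⇑v) = (μ : ℂ) * q := by
      rw [← Matrix.mulVec_mulVec, Matrix.dotProduct_mulVec]
      have hrow : star ⇑v ᵥ* D = (μ : ℂ) • star ⇑v := by
        have : star ⇑v ᵥ* D = star (Dᴴ *ᵥ ⇑v) := by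
          rw [Matrix.star_mulVec, Matrix.conjTranspose_conjTranspose]
        rw [this, hD_herm.eq, hDv, star_smul]
        simp
      rw [hrow, smul_dotProduct]
      simp [hq, smul_eq_mul]
    rw [hAD, hDA]
    ring
  -- bound the right-hand side
  set B : Matrix (Fin n) (Fin n) ℂ := H' * H s₀ + H s₀ * H' with hB
  have hBnorm : ‖B‖ ≤ 2 * ‖H'‖ := by
    calc ‖B‖ ≤ ‖H' * H s₀‖ + ‖H s₀ * H'‖ := norm_add_le _ _
    _ ≤ ‖H'‖ * ‖H s₀‖ + ‖H s₀‖ * ‖H'‖ :=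
        add_le_add (Matrix.l2_opNorm_mul _ _) (Matrix.l2_opNorm_mul _ _)
    _ ≤ ‖H'‖ * 1 + 1 * ‖H'‖ := by
        have h2 : 0 ≤ ‖H'‖ := norm_nonneg _
        have h3 : ‖H s₀‖ ≤ 1 := hlt.le
        nlinarith
    _ = 2 * ‖H'‖ := by ring
  have hzbound : ‖star ⇑v ⬝ᵥ ((D * A + A * D) *ᵥ ⇑v)‖ ≤ 2 * ‖H'‖ := by
    rw [hEq]
    calc ‖star ⇑v ⬝ᵥ ((-B) *ᵥ ⇑v)‖ ≤ ‖-B‖ * ‖v‖ ^ 2 := aux_quad_bound (-B) v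
    _ = ‖B‖ := by rw [norm_neg, hv1]; ring
    _ ≤ 2 * ‖H'‖ := hBnorm
  -- put everything together
  rw [hkey] at hzbound
  have hre : (2 * (μ : ℂ) * q).re = 2 * μ * q.re := by
    have : (2 * (μ : ℂ)) = ((2 * μ : ℝ) : ℂ) := by push_cast; ring
    rw [this, Complex.re_ofReal_mul]
    try ring
  have habs : |2 * μ * q.re| ≤ ‖2 * (μ : ℂ) * q‖ := by
    rw [← hre]
    exact (Complex.abs_re_le_norm _).trans_eq rfl
  have hfinal : 2 * |μ| * c ≤ 2 * ‖H'‖ := by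
    have h5 : 2 * |μ| * c ≤ |2 * μ * q.re| := by
      rw [abs_mul, abs_mul]
      have : |q.re| = q.re := abs_of_nonneg (hcpos.le.trans hqre)
      rw [this]
      have h6 : (0:ℝ) ≤ 2 * |μ| := by positivity
      calc 2 * |μ| * c = |2| * |μ| * c := by norm_num
      _ ≤ |2| * |μ| * q.re := mul_le_mul_of_nonneg_left hqre (by positivity)
    exact h5.trans (habs.trans hzbound)
  rw [hi]
  nlinarith [hfinal]
end

section
/- Let g(s) = √(1 − 4(1 − M/N) s(1−s)) for 0 < M ≤ N with M/N ≤ 1/4. Then for every p > 1, ∫₀¹ g(s)^{−p} ds = O((N/M)^{(p−1)/2}), i.e. there is a constant C_p independent of M, N such that ∫₀¹ g(s)^{−p} ds ≤ C_p (N/M)^{(p−1)/2}. Moreover for p = 1, ∫₀¹ g(s)^{−1} ds = O(log(N/M)). -/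
open Real

private lemma gpos {m : ℝ} (hm : 0 < m) (hm1 : m ≤ 1) (s : ℝ) :
    0 < 1 - 4 * (1 - m) * s * (1 - s) := by nlinarith [sq_nonneg (1 - 2*s)]

private lemma gspos {m : ℝ} (hm : 0 < m) (hm1 : m ≤ 1) (s : ℝ) :
    0 < Real.sqrt (1 - 4 * (1 - m) * s * (1 - s)) :=
  Real.sqrt_pos.mpr (gpos hm hm1 s)

private lemma sqrt_lb {m : ℝ} (hm : 0 < m) (hm1 : m ≤ 1) (s : ℝ) :
    Real.sqrt m ≤ Real.sqrt (1 - 4 * (1 - m) * s * (1 - s)) :=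
  Real.sqrt_le_sqrt (by nlinarith [sq_nonneg (1 - 2*s)])

private lemma sqrt_lb_left {m s : ℝ} (hm : 0 ≤ m) (hs : 0 ≤ s) (hs1 : s ≤ 1) :
    1 - 2*s ≤ Real.sqrt (1 - 4 * (1 - m) * s * (1 - s)) := by
  rcases le_or_gt (1 - 2*s) 0 with h | h
  · exact h.trans (Real.sqrt_nonneg _)
  · rw [show (1 - 2*s) = Real.sqrt ((1-2*s)^2) from (Real.sqrt_sq h.le).symm]
    exact Real.sqrt_le_sqrt (by nlinarith [mul_nonneg (mul_nonneg hm hs) (by linarith : (0:ℝ) ≤ 1 - s)])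

private lemma sqrt_lb_right {m s : ℝ} (hm : 0 ≤ m) (hs : 0 ≤ s) (hs1 : s ≤ 1) :
    2*s - 1 ≤ Real.sqrt (1 - 4 * (1 - m) * s * (1 - s)) := by
  rcases le_or_gt (2*s - 1) 0 with h | h
  · exact h.trans (Real.sqrt_nonneg _)
  · rw [show (2*s - 1) = Real.sqrt ((2*s-1)^2) from (Real.sqrt_sq h.le).symm]
    exact Real.sqrt_le_sqrt (by nlinarith [mul_nonneg (mul_nonneg hm hs) (by linarith : (0:ℝ) ≤ 1 - s)])

private lemma g_cont (m : ℝ) :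
    Continuous fun s : ℝ => Real.sqrt (1 - 4 * (1 - m) * s * (1 - s)) := by
  fun_prop

private lemma split_bound {f : ℝ → ℝ} (hf : Continuous f) {s1 s2 A B C : ℝ}
    (hA : (∫ s in (0:ℝ)..s1, f s) ≤ A) (hB : (∫ s in s1..s2, f s) ≤ B)
    (hC : (∫ s in s2..(1:ℝ), f s) ≤ C) :
    (∫ s in (0:ℝ)..1, f s) ≤ A + B + C := by
  have h1 := intervalIntegral.integral_add_adjacent_intervals
    (hf.intervalIntegrable (μ := MeasureTheory.volume) 0 s1) (hf.intervalIntegrable s1 s2)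
  have h2 := intervalIntegral.integral_add_adjacent_intervals
    (hf.intervalIntegrable (μ := MeasureTheory.volume) 0 s2) (hf.intervalIntegrable s2 1)
  rw [← h2, ← h1]
  linarith

private lemma rbound {m : ℝ} (hm : 0 < m) (hm4 : m ≤ 1/4) : Real.sqrt m ≤ 1/2 := by
  rw [show (1/2 : ℝ) = Real.sqrt ((1/2)^2) from (Real.sqrt_sq (by norm_num)).symm]
  exact Real.sqrt_le_sqrt (by nlinarith)

private lemma main_gt {p m : ℝ} (hp : 1 < p) (hm : 0 < m) (hm4 : m ≤ 1/4) :
    (∫ s in (0:ℝ)..1, (Real.sqrt (1 - 4 * (1 - m) * s * (1 - s))) ^ (-p))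
      ≤ (p/(p-1)) * (Real.sqrt m) ^ (1 - p) := by
  have hm1 : m ≤ 1 := by linarith
  set r := Real.sqrt m with hrdef
  have hr : 0 < r := Real.sqrt_pos.mpr hm
  have hr2 : r ≤ 1/2 := rbound hm hm4
  set s1 : ℝ := (1 - r)/2 with hs1def
  set s2 : ℝ := (1 + r)/2 with hs2def
  have h0s1 : 0 ≤ s1 := by simp only [hs1def]; linarith
  have hs1s2 : s1 ≤ s2 := by simp only [hs1def, hs2def]; linarith
  have hs21 : s2 ≤ 1 := by simp only [hs2def]; linarith
  have hfc : Continuous fun s : ℝ =>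
      (Real.sqrt (1 - 4 * (1 - m) * s * (1 - s))) ^ (-p) :=
    (g_cont m).rpow_const fun s => Or.inl (gspos hm hm1 s).ne'
  have hX : (0:ℝ) < r ^ (1 - p) := Real.rpow_pos_of_pos hr _
  -- middle bound
  have hmid : (∫ s in s1..s2, (Real.sqrt (1 - 4 * (1 - m) * s * (1 - s))) ^ (-p))
      ≤ r ^ (1 - p) := by
    have : (∫ s in s1..s2, (Real.sqrt (1 - 4 * (1 - m) * s * (1 - s))) ^ (-p))
        ≤ ∫ _ in s1..s2, r ^ (-p) := by
      apply intervalIntegral.integral_mono_on hs1s2 (hfc.intervalIntegrable _ _)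
        intervalIntegrable_const
      intro s _
      exact Real.rpow_le_rpow_of_nonpos hr (sqrt_lb hm hm1 s) (by linarith)
    rw [intervalIntegral.integral_const, smul_eq_mul] at this
    calc _ ≤ (s2 - s1) * r ^ (-p) := this
      _ = r ^ (1:ℝ) * r ^ (-p) := by rw [Real.rpow_one, hs1def, hs2def]; ring_nf
      _ = r ^ (1 - p) := by rw [← Real.rpow_add hr]; ring_nf
  -- left bound
  have hleft : (∫ s in (0:ℝ)..s1, (Real.sqrt (1 - 4 * (1 - m) * s * (1 - s))) ^ (-p))
      ≤ (r ^ (1 - p) - 1) * (2*(p-1))⁻¹ := by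
    have hcomp : (∫ s in (0:ℝ)..s1, (Real.sqrt (1 - 4 * (1 - m) * s * (1 - s))) ^ (-p))
        ≤ ∫ s in (0:ℝ)..s1, (1 - 2*s) ^ (-p) := by
      apply intervalIntegral.integral_mono_on h0s1 (hfc.intervalIntegrable _ _)
      · apply ContinuousOn.intervalIntegrable
        apply ContinuousOn.rpow_const (by fun_prop)
        intro s hs
        rw [Set.uIcc_of_le h0s1] at hs
        left
        have : r ≤ 1 - 2*s := by simp only [hs1def] at hs; linarith [hs.2]
        exact ne_of_gt (by linarith)
      · intro s hs
        have hpos : 0 < 1 - 2*s := by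
          have : r ≤ 1 - 2*s := by simp only [hs1def] at hs; linarith [hs.2]
          linarith
        exact Real.rpow_le_rpow_of_nonpos hpos
          (sqrt_lb_left hm.le hs.1 (by linarith [hs.2])) (by linarith)
    have hval : (∫ s in (0:ℝ)..s1, (1 - 2*s) ^ (-p))
        = (r ^ (1 - p) - 1) * (2*(p-1))⁻¹ := by
      have hder : ∀ s ∈ Set.uIcc (0:ℝ) s1,
          HasDerivAt (fun s : ℝ => (1 - 2*s) ^ (1-p) * (2*(p-1))⁻¹)
            ((1 - 2*s) ^ (-p)) s := by
        intro s hs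
        rw [Set.uIcc_of_le h0s1] at hs
        have hpos : 0 < 1 - 2*s := by
          have : r ≤ 1 - 2*s := by simp only [hs1def] at hs; linarith [hs.2]
          linarith
        have h1 : HasDerivAt (fun s : ℝ => 1 - 2*s) (-2) s := by
          simpa using ((hasDerivAt_id s).const_mul (2:ℝ)).const_sub 1
        have h2 : HasDerivAt (fun x : ℝ => x ^ (1-p))
            ((1-p) * (1 - 2*s) ^ (1-p-1)) (1 - 2*s) :=
          Real.hasDerivAt_rpow_const (Or.inl hpos.ne')
        have h3 := (h2.comp s h1).mul_const (2*(p-1))⁻¹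
        refine h3.congr_deriv ?_
        rw [show (1-p-1) = -p by ring]
        have hne : (2:ℝ)*(p-1) ≠ 0 := ne_of_gt (by linarith)
        have hne' : p - 1 ≠ 0 := ne_of_gt (by linarith)
        field_simp
        ring
      rw [intervalIntegral.integral_eq_sub_of_hasDerivAt hder]
      · have : 1 - 2*s1 = r := by simp only [hs1def]; ring
        rw [this]
        norm_num [Real.one_rpow]
        try ring
      · apply ContinuousOn.intervalIntegrable
        apply ContinuousOn.rpow_const (by fun_prop)
        intro s hs
        rw [Set.uIcc_of_le h0s1] at hs
        left
        have : r ≤ 1 - 2*s := by simp only [hs1def] at hs; linarith [hs.2]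
        exact ne_of_gt (by linarith)
    linarith [hcomp, hval.le, hval.ge]
  -- right bound
  have hright : (∫ s in s2..(1:ℝ), (Real.sqrt (1 - 4 * (1 - m) * s * (1 - s))) ^ (-p))
      ≤ (r ^ (1 - p) - 1) * (2*(p-1))⁻¹ := by
    have hcomp : (∫ s in s2..(1:ℝ), (Real.sqrt (1 - 4 * (1 - m) * s * (1 - s))) ^ (-p))
        ≤ ∫ s in s2..(1:ℝ), (2*s - 1) ^ (-p) := by
      apply intervalIntegral.integral_mono_on hs21 (hfc.intervalIntegrable _ _)
      · apply ContinuousOn.intervalIntegrable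
        apply ContinuousOn.rpow_const (by fun_prop)
        intro s hs
        rw [Set.uIcc_of_le hs21] at hs
        left
        have : r ≤ 2*s - 1 := by simp only [hs2def] at hs; linarith [hs.1]
        exact ne_of_gt (by linarith)
      · intro s hs
        have hpos : 0 < 2*s - 1 := by
          have : r ≤ 2*s - 1 := by simp only [hs2def] at hs; linarith [hs.1]
          linarith
        exact Real.rpow_le_rpow_of_nonpos hpos
          (sqrt_lb_right hm.le (by linarith [hs.1]) hs.2) (by linarith)
    have hval : (∫ s in s2..(1:ℝ), (2*s - 1) ^ (-p))
        = (r ^ (1 - p) - 1) * (2*(p-1))⁻¹ := by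
      have hder : ∀ s ∈ Set.uIcc s2 (1:ℝ),
          HasDerivAt (fun s : ℝ => -((2*s - 1) ^ (1-p)) * (2*(p-1))⁻¹)
            ((2*s - 1) ^ (-p)) s := by
        intro s hs
        rw [Set.uIcc_of_le hs21] at hs
        have hpos : 0 < 2*s - 1 := by
          have : r ≤ 2*s - 1 := by simp only [hs2def] at hs; linarith [hs.1]
          linarith
        have h1 : HasDerivAt (fun s : ℝ => 2*s - 1) (2) s := by
          simpa using ((hasDerivAt_id s).const_mul (2:ℝ)).sub_const 1
        have h2 : HasDerivAt (fun x : ℝ => x ^ (1-p))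
            ((1-p) * (2*s - 1) ^ (1-p-1)) (2*s - 1) :=
          Real.hasDerivAt_rpow_const (Or.inl hpos.ne')
        have h3 := ((h2.comp s h1).neg).mul_const (2*(p-1))⁻¹
        refine h3.congr_deriv ?_
        rw [show (1-p-1) = -p by ring]
        have hne : (2:ℝ)*(p-1) ≠ 0 := ne_of_gt (by linarith)
        have hne' : p - 1 ≠ 0 := ne_of_gt (by linarith)
        field_simp
        ring
      rw [intervalIntegral.integral_eq_sub_of_hasDerivAt hder]
      · have : 2*s2 - 1 = r := by simp only [hs2def]; ring
        rw [this]
        norm_num [Real.one_rpow]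
        try ring
      · apply ContinuousOn.intervalIntegrable
        apply ContinuousOn.rpow_const (by fun_prop)
        intro s hs
        rw [Set.uIcc_of_le hs21] at hs
        left
        have : r ≤ 2*s - 1 := by simp only [hs2def] at hs; linarith [hs.1]
        exact ne_of_gt (by linarith)
    linarith [hcomp, hval.le, hval.ge]
  have htot := split_bound hfc hleft hmid hright
  have hinv : 0 < (2*(p-1))⁻¹ := inv_pos.mpr (by linarith)
  calc (∫ s in (0:ℝ)..1, (Real.sqrt (1 - 4 * (1 - m) * s * (1 - s))) ^ (-p))
      ≤ (r ^ (1 - p) - 1) * (2*(p-1))⁻¹ + r ^ (1 - p)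
        + (r ^ (1 - p) - 1) * (2*(p-1))⁻¹ := htot
    _ ≤ r ^ (1 - p) * (2*(p-1))⁻¹ + r ^ (1 - p) + r ^ (1 - p) * (2*(p-1))⁻¹ := by
        nlinarith
    _ = (p/(p-1)) * r ^ (1 - p) := by
        have hne : p - 1 ≠ 0 := ne_of_gt (by linarith)
        field_simp
        ring

private lemma main_one {m : ℝ} (hm : 0 < m) (hm4 : m ≤ 1/4) :
    (∫ s in (0:ℝ)..1, (Real.sqrt (1 - 4 * (1 - m) * s * (1 - s)))⁻¹)
      ≤ 1 - Real.log m / 2 := by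
  have hm1 : m ≤ 1 := by linarith
  set r := Real.sqrt m with hrdef
  have hr : 0 < r := Real.sqrt_pos.mpr hm
  have hr2 : r ≤ 1/2 := rbound hm hm4
  set s1 : ℝ := (1 - r)/2 with hs1def
  set s2 : ℝ := (1 + r)/2 with hs2def
  have h0s1 : 0 ≤ s1 := by simp only [hs1def]; linarith
  have hs1s2 : s1 ≤ s2 := by simp only [hs1def, hs2def]; linarith
  have hs21 : s2 ≤ 1 := by simp only [hs2def]; linarith
  have hfc : Continuous fun s : ℝ =>
      (Real.sqrt (1 - 4 * (1 - m) * s * (1 - s)))⁻¹ :=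
    (g_cont m).inv₀ fun s => (gspos hm hm1 s).ne'
  have hlogr : Real.log r = Real.log m / 2 := by
    rw [hrdef, Real.log_sqrt hm.le]
  -- middle
  have hmid : (∫ s in s1..s2, (Real.sqrt (1 - 4 * (1 - m) * s * (1 - s)))⁻¹) ≤ 1 := by
    have : (∫ s in s1..s2, (Real.sqrt (1 - 4 * (1 - m) * s * (1 - s)))⁻¹)
        ≤ ∫ _ in s1..s2, r⁻¹ := by
      apply intervalIntegral.integral_mono_on hs1s2 (hfc.intervalIntegrable _ _)
        intervalIntegrable_const
      intro s _
      exact inv_anti₀ hr (sqrt_lb hm hm1 s)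
    rw [intervalIntegral.integral_const, smul_eq_mul] at this
    have h2 : (s2 - s1) * r⁻¹ = 1 := by
      simp only [hs1def, hs2def]
      field_simp
      ring
    linarith
  -- left
  have hleft : (∫ s in (0:ℝ)..s1, (Real.sqrt (1 - 4 * (1 - m) * s * (1 - s)))⁻¹)
      ≤ -Real.log r / 2 := by
    have hcomp : (∫ s in (0:ℝ)..s1, (Real.sqrt (1 - 4 * (1 - m) * s * (1 - s)))⁻¹)
        ≤ ∫ s in (0:ℝ)..s1, (1 - 2*s)⁻¹ := by
      apply intervalIntegral.integral_mono_on h0s1 (hfc.intervalIntegrable _ _)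
      · apply ContinuousOn.intervalIntegrable
        apply ContinuousOn.inv₀ (by fun_prop)
        intro s hs
        rw [Set.uIcc_of_le h0s1] at hs
        have : r ≤ 1 - 2*s := by simp only [hs1def] at hs; linarith [hs.2]
        exact ne_of_gt (by linarith)
      · intro s hs
        have hpos : 0 < 1 - 2*s := by
          have : r ≤ 1 - 2*s := by simp only [hs1def] at hs; linarith [hs.2]
          linarith
        exact inv_anti₀ hpos (sqrt_lb_left hm.le hs.1 (by linarith [hs.2]))
    have hval : (∫ s in (0:ℝ)..s1, (1 - 2*s)⁻¹) = -Real.log r / 2 := by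
      have hder : ∀ s ∈ Set.uIcc (0:ℝ) s1,
          HasDerivAt (fun s : ℝ => -Real.log (1 - 2*s) / 2) ((1 - 2*s)⁻¹) s := by
        intro s hs
        rw [Set.uIcc_of_le h0s1] at hs
        have hpos : 0 < 1 - 2*s := by
          have : r ≤ 1 - 2*s := by simp only [hs1def] at hs; linarith [hs.2]
          linarith
        have h1 : HasDerivAt (fun s : ℝ => 1 - 2*s) (-2) s := by
          simpa using ((hasDerivAt_id s).const_mul (2:ℝ)).const_sub 1
        have h2 := (Real.hasDerivAt_log hpos.ne').comp s h1
        have h3 := (h2.neg).div_const 2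
        refine h3.congr_deriv ?_
        field_simp
      rw [intervalIntegral.integral_eq_sub_of_hasDerivAt hder]
      · have : 1 - 2*s1 = r := by simp only [hs1def]; ring
        rw [this]
        norm_num
        try ring
      · apply ContinuousOn.intervalIntegrable
        apply ContinuousOn.inv₀ (by fun_prop)
        intro s hs
        rw [Set.uIcc_of_le h0s1] at hs
        have : r ≤ 1 - 2*s := by simp only [hs1def] at hs; linarith [hs.2]
        exact ne_of_gt (by linarith)
    linarith [hcomp, hval.le]
  -- right
  have hright : (∫ s in s2..(1:ℝ), (Real.sqrt (1 - 4 * (1 - m) * s * (1 - s)))⁻¹)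
      ≤ -Real.log r / 2 := by
    have hcomp : (∫ s in s2..(1:ℝ), (Real.sqrt (1 - 4 * (1 - m) * s * (1 - s)))⁻¹)
        ≤ ∫ s in s2..(1:ℝ), (2*s - 1)⁻¹ := by
      apply intervalIntegral.integral_mono_on hs21 (hfc.intervalIntegrable _ _)
      · apply ContinuousOn.intervalIntegrable
        apply ContinuousOn.inv₀ (by fun_prop)
        intro s hs
        rw [Set.uIcc_of_le hs21] at hs
        have : r ≤ 2*s - 1 := by simp only [hs2def] at hs; linarith [hs.1]
        exact ne_of_gt (by linarith)
      · intro s hs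
        have hpos : 0 < 2*s - 1 := by
          have : r ≤ 2*s - 1 := by simp only [hs2def] at hs; linarith [hs.1]
          linarith
        exact inv_anti₀ hpos (sqrt_lb_right hm.le (by linarith [hs.1]) hs.2)
    have hval : (∫ s in s2..(1:ℝ), (2*s - 1)⁻¹) = -Real.log r / 2 := by
      have hder : ∀ s ∈ Set.uIcc s2 (1:ℝ),
          HasDerivAt (fun s : ℝ => Real.log (2*s - 1) / 2) ((2*s - 1)⁻¹) s := by
        intro s hs
        rw [Set.uIcc_of_le hs21] at hs
        have hpos : 0 < 2*s - 1 := by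
          have : r ≤ 2*s - 1 := by simp only [hs2def] at hs; linarith [hs.1]
          linarith
        have h1 : HasDerivAt (fun s : ℝ => 2*s - 1) (2) s := by
          simpa using ((hasDerivAt_id s).const_mul (2:ℝ)).sub_const 1
        have h2 := (Real.hasDerivAt_log hpos.ne').comp s h1
        have h3 := h2.div_const 2
        refine h3.congr_deriv ?_
        field_simp
      rw [intervalIntegral.integral_eq_sub_of_hasDerivAt hder]
      · have : 2*s2 - 1 = r := by simp only [hs2def]; ring
        rw [this]
        norm_num
        try ring
      · apply ContinuousOn.intervalIntegrable
        apply ContinuousOn.inv₀ (by fun_prop)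
        intro s hs
        rw [Set.uIcc_of_le hs21] at hs
        have : r ≤ 2*s - 1 := by simp only [hs2def] at hs; linarith [hs.1]
        exact ne_of_gt (by linarith)
    exact hcomp.trans hval.le
  have htot := split_bound hfc hleft hmid hright
  rw [hlogr] at htot
  linarith

/-- Grover gap integrals.
For the Grover gap `g(s) = √(1 − 4(1 − M/N) s (1−s))` (with `0 < M ≤ N`,
`M/N ≤ 1/4`): for every `p > 1` there is a constant `C_p`, independent of `M, N`,
with `∫₀¹ g(s)^{−p} ds ≤ C_p (N/M)^{(p−1)/2}`; and for `p = 1`,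
`∫₀¹ g(s)^{−1} ds = O(log (N/M))`. -/
theorem statement15 :
    (∀ p : ℝ, 1 < p → ∃ C > (0:ℝ), ∀ M N : ℝ, 0 < M → M ≤ N → M / N ≤ 1 / 4 →
      (∫ s in (0:ℝ)..1,
          (Real.sqrt (1 - 4 * (1 - M / N) * s * (1 - s))) ^ (-p))
        ≤ C * (N / M) ^ ((p - 1) / 2)) ∧
    (∃ C > (0:ℝ), ∀ M N : ℝ, 0 < M → M ≤ N → M / N ≤ 1 / 4 →
      (∫ s in (0:ℝ)..1,
          (Real.sqrt (1 - 4 * (1 - M / N) * s * (1 - s)))⁻¹)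
        ≤ C * Real.log (N / M)) := by
  constructor
  · intro p hp
    refine ⟨p/(p-1), div_pos (by linarith) (by linarith), fun M N hM hMN hm4 => ?_⟩
    have hN : 0 < N := lt_of_lt_of_le hM hMN
    have hm : 0 < M / N := div_pos hM hN
    have key := main_gt hp hm hm4
    have heq : (Real.sqrt (M/N)) ^ (1 - p) = (N / M) ^ ((p - 1) / 2) := by
      rw [Real.sqrt_eq_rpow, ← Real.rpow_mul hm.le,
        show N / M = (M/N)⁻¹ by rw [inv_div],
        ← Real.rpow_neg_one (M/N), ← Real.rpow_mul hm.le]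
      norm_num
      ring_nf
    rw [heq] at key
    exact key
  · refine ⟨3/2, by norm_num, fun M N hM hMN hm4 => ?_⟩
    have hN : 0 < N := lt_of_lt_of_le hM hMN
    have hm : 0 < M / N := div_pos hM hN
    have key := main_one hm hm4
    have hlogeq : Real.log (N / M) = -Real.log (M / N) := by
      rw [show N / M = (M/N)⁻¹ by rw [inv_div], Real.log_inv]
    have hlog4 : (1:ℝ) ≤ Real.log (N / M) := by
      rw [Real.le_log_iff_exp_le (by positivity)]
      have h4 : (4:ℝ) ≤ N / M := by
        have h := (div_le_div_iff₀ hN (by norm_num : (0:ℝ) < 4)).mp hm4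
        rw [le_div_iff₀ hM]
        linarith
      calc Real.exp 1 ≤ 3 := by
            have := Real.exp_one_lt_d9
            linarith
        _ ≤ N / M := by linarith
    calc (∫ s in (0:ℝ)..1, (Real.sqrt (1 - 4 * (1 - M / N) * s * (1 - s)))⁻¹)
        ≤ 1 - Real.log (M/N) / 2 := key
      _ = 1 + Real.log (N/M) / 2 := by rw [hlogeq]; ring
      _ ≤ Real.log (N/M) + Real.log (N/M) / 2 := by linarith
      _ = 3/2 * Real.log (N/M) := by ring
end

section
/- Let H₀ = 1 − |u⟩⟨u| and H₁ = 1 − P_M on ℂ^N, where |u⟩ is the uniform superposition and P_M projects onto an M-dimensional subspace M with 1 ≤ M < N. Then the eigenvalues of H(s) = (1−s)H₀ + sH₁ are: λ_{1,2}(s) = (1 ± √(1 − 4(1 − M/N)s(1−s)))/2 each with multiplicity 1, λ₃(s) = 1 − s with multiplicity M − 1, and λ₄ = 1 with multiplicity N − M − 1 (assuming |u⟩ ∉ M and |u⟩ ∉ M^⊥). In particular the gap between λ₁ and λ₂ equals √(1 − 4(1 − M/N)s(1−s)). -/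
open scoped Matrix.Norms.L2Operator ComplexOrder
open Matrix Polynomial

lemma aux_eval_charpoly {n : ℕ} (A : Matrix (Fin n) (Fin n) ℂ) (x : ℂ) :
    A.charpoly.eval x = (x • (1 : Matrix (Fin n) (Fin n) ℂ) - A).det := by
  rw [Matrix.charpoly, eval_det, Matrix.matPolyEquiv_charmatrix,
    Polynomial.eval_sub, Polynomial.eval_X, Polynomial.eval_C]
  congr 1
  rw [Matrix.scalar_apply, smul_one_eq_diagonal]

lemma aux_det_proj {n m : ℕ} (P : Matrix (Fin n) (Fin n) ℂ)
    (hP : P.IsHermitian) (hP2 : P * P = P) (hrank : P.rank = m) (x y : ℂ) :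
    (x • (1 : Matrix (Fin n) (Fin n) ℂ) + y • P).det = x ^ (n - m) * (x + y) ^ m := by
  classical
  set U : Matrix (Fin n) (Fin n) ℂ := (hP.eigenvectorUnitary : Matrix (Fin n) (Fin n) ℂ) with hU
  set E : Fin n → ℝ := hP.eigenvalues with hE
  set D : Matrix (Fin n) (Fin n) ℂ := diagonal (fun i => (E i : ℂ)) with hD
  have hUU : U * star U = 1 := (Matrix.mem_unitaryGroup_iff).mp hP.eigenvectorUnitary.2
  have hUU' : star U * U = 1 := (Matrix.mem_unitaryGroup_iff').mp hP.eigenvectorUnitary.2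
  have hspec : P = U * D * star U := hP.spectral_theorem
  have hDrw : D = star U * P * U := by
    rw [hspec]
    calc D = (star U * U) * D * (star U * U) := by rw [hUU']; simp
      _ = star U * (U * D * star U) * U := by noncomm_ring
  have hD2 : D * D = D := by
    rw [hDrw]
    calc (star U * P * U) * (star U * P * U)
        = star U * (P * (U * star U) * P) * U := by noncomm_ring
      _ = star U * (P * P) * U := by rw [hUU]; simp [Matrix.mul_assoc]
      _ = star U * P * U := by rw [hP2, Matrix.mul_assoc]
  have hE01 : ∀ i, E i = 0 ∨ E i = 1 := by
    intro i
    have h := hD2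
    rw [hD, diagonal_mul_diagonal] at h
    have h2 : ((E i : ℂ)) * (E i : ℂ) = (E i : ℂ) := by
      have := congr_fun (Matrix.diagonal_injective h) i
      simpa using this
    have h3 : (E i) * (E i) = E i := by exact_mod_cast h2
    have : E i * (E i - 1) = 0 := by nlinarith [h3]
    rcases mul_eq_zero.mp this with h | h
    · exact Or.inl h
    · right; linarith
  have hdetU : IsUnit U.det := IsUnit.of_mul_eq_one (star U).det
    (by rw [← det_mul, hUU, det_one])
  have hdetU' : IsUnit (star U).det := IsUnit.of_mul_eq_one U.det
    (by rw [← det_mul, hUU', det_one])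
  have hcard1 : (Finset.univ.filter (fun i => E i = 1)).card = m := by
    have hrD : D.rank = m := by
      rw [hspec, Matrix.mul_assoc] at hrank
      rw [Matrix.rank_mul_eq_right_of_isUnit_det U (D * star U) hdetU] at hrank
      rwa [Matrix.rank_mul_eq_left_of_isUnit_det (star U) D hdetU'] at hrank
    rw [hD, Matrix.rank_diagonal, Fintype.card_subtype] at hrD
    rw [← hrD]
    congr 1
    ext i
    simp only [Finset.mem_filter, Finset.mem_univ, true_and]
    constructor
    · intro h
      rw [h]; norm_num
    · intro h
      rcases hE01 i with h0 | h1
      · exact absurd (by exact_mod_cast h0 : (E i : ℂ) = 0) h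
      · exact h1
  have key : x • (1 : Matrix (Fin n) (Fin n) ℂ) + y • P
      = U * (x • (1 : Matrix (Fin n) (Fin n) ℂ) + y • D) * star U := by
    rw [Matrix.mul_add, Matrix.add_mul]
    congr 1
    · rw [Matrix.mul_smul, Matrix.mul_one, Matrix.smul_mul, hUU]
    · rw [Matrix.mul_smul, Matrix.smul_mul, ← hspec]
  have hmid : x • (1 : Matrix (Fin n) (Fin n) ℂ) + y • D
      = diagonal (fun i => x + y * (E i : ℂ)) := by
    rw [hD, smul_one_eq_diagonal]
    ext i j
    rcases eq_or_ne i j with rfl | h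
    · simp [Matrix.diagonal_apply]
    · simp [Matrix.diagonal_apply_ne _ h]
  rw [key, det_mul, det_mul, hmid, det_diagonal]
  rw [mul_comm U.det, mul_assoc, ← det_mul, hUU, det_one, mul_one]
  rw [← Finset.prod_filter_mul_prod_filter_not Finset.univ (fun i => E i = 1)]
  have p1 : (∏ i ∈ Finset.univ.filter (fun i => E i = 1), (x + y * (E i : ℂ)))
      = (x + y) ^ m := by
    rw [Finset.prod_congr rfl (fun i hi => ?_), Finset.prod_const, hcard1]
    rw [(Finset.mem_filter.mp hi).2]; norm_num
  have p2 : (∏ i ∈ Finset.univ.filter (fun i => ¬ E i = 1), (x + y * (E i : ℂ)))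
      = x ^ (n - m) := by
    have hc : (Finset.univ.filter (fun i => ¬ E i = 1)).card = n - m := by
      have := Finset.card_filter_add_card_filter_not (s := Finset.univ)
        (p := fun i : Fin n => E i = 1)
      simp only [Finset.card_univ, Fintype.card_fin] at this
      omega
    rw [Finset.prod_congr rfl (fun i hi => ?_), Finset.prod_const, hc]
    have h0 : E i = 0 := (hE01 i).resolve_right (Finset.mem_filter.mp hi).2
    rw [h0]; norm_num
  rw [p1, p2, mul_comm]

/-- spectrum of the adiabatic Grover Hamiltonian.
Let `u` be the uniform superposition on `ℂ^N`, `PM` the orthogonal projection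
onto an `M`-dimensional subspace with `⟨u|PM|u⟩ = M/N` (`1 ≤ M < N`), and
`H(s) = (1−s)(1 − |u⟩⟨u|) + s(1 − PM)`.  Then the eigenvalues of `H(s)` are
`λ_{1,2}(s) = (1 ± √(1 − 4(1 − M/N)s(1−s)))/2` with multiplicity `1` each,
`1 − s` with multiplicity `M − 1`, and `1` with multiplicity `N − M − 1`
(stated via the characteristic polynomial); moreover `λ₁ − λ₂` equals the gap
`√(1 − 4(1 − M/N)s(1−s))`. -/
theorem statement19 (N M : ℕ) (hN : 2 ≤ N) (hM : 1 ≤ M) (hMN : M < N)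
    (u : Fin N → ℂ) (hu : u = fun _ => ((1 / Real.sqrt N : ℝ) : ℂ))
    (PM : Matrix (Fin N) (Fin N) ℂ)
    (hPM_herm : PM.IsHermitian) (hPM_proj : PM * PM = PM)
    (hPM_rank : PM.rank = M)
    (hoverlap : star u ⬝ᵥ PM.mulVec u = (M : ℂ) / N)
    (s : ℝ) (hs : s ∈ Set.Icc (0:ℝ) 1) :
    (((1 - s : ℂ) • ((1 : Matrix (Fin N) (Fin N) ℂ) - vecMulVec u (star u)) +
        (s : ℂ) • ((1 : Matrix (Fin N) (Fin N) ℂ) - PM)).charpoly =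
      (X - C (((1 + Real.sqrt (1 - 4 * (1 - (M:ℝ)/N) * s * (1 - s))) / 2 : ℝ) : ℂ)) *
      (X - C (((1 - Real.sqrt (1 - 4 * (1 - (M:ℝ)/N) * s * (1 - s))) / 2 : ℝ) : ℂ)) *
      (X - C ((1 - s : ℝ) : ℂ)) ^ (M - 1) *
      (X - C 1) ^ (N - M - 1)) ∧
    ((1 + Real.sqrt (1 - 4 * (1 - (M:ℝ)/N) * s * (1 - s))) / 2 -
        (1 - Real.sqrt (1 - 4 * (1 - (M:ℝ)/N) * s * (1 - s))) / 2 =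
      Real.sqrt (1 - 4 * (1 - (M:ℝ)/N) * s * (1 - s))) := by
  have hNR : (0:ℝ) < N := by positivity
  have hNC : (N:ℂ) ≠ 0 := by exact_mod_cast hNR.ne'
  set μr : ℝ := (M:ℝ)/N with hμr
  have hμ0 : 0 ≤ μr := by positivity
  have hμ1 : μr ≤ 1 := by
    rw [hμr, div_le_one hNR]; exact_mod_cast hMN.le
  set d : ℝ := Real.sqrt (1 - 4 * (1 - μr) * s * (1 - s)) with hd
  have hdisc : 0 ≤ 1 - 4 * (1 - μr) * s * (1 - s) := by
    nlinarith [sq_nonneg (1 - 2*s), mul_nonneg (mul_nonneg hμ0 hs.1)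
      (sub_nonneg.2 hs.2)]
  have hd2 : d ^ 2 = 1 - 4 * (1 - μr) * s * (1 - s) := Real.sq_sqrt hdisc
  refine ⟨?_, by ring⟩
  -- casts
  set sC : ℂ := (s : ℂ) with hsC
  set μ : ℂ := (M:ℂ)/(N:ℂ) with hμ
  have hμcast : (μr : ℂ) = μ := by push_cast [hμr]; ring
  set aR : ℝ := (1 + d)/2 with haR
  set bR : ℝ := (1 - d)/2 with hbR
  have hsumC : (aR : ℂ) + (bR : ℂ) = 1 := by push_cast [haR, hbR]; ring
  have hprodR : aR * bR = (1 - μr) * s * (1 - s) := by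
    rw [haR, hbR]; nlinarith [hd2]
  have hprodC : (aR : ℂ) * (bR : ℂ) = (1 - μ) * sC * (1 - sC) := by
    rw [← Complex.ofReal_mul, hprodR]
    push_cast [hμcast]
    ring
  -- norm of u
  have huu : star u ⬝ᵥ u = 1 := by
    subst hu
    simp only [dotProduct, Pi.star_apply, RCLike.star_def, Complex.conj_ofReal,
      ← Complex.ofReal_mul]
    rw [Finset.sum_const, Finset.card_univ, Fintype.card_fin]
    have : (1 / Real.sqrt N) * (1 / Real.sqrt N) = 1 / N := by
      rw [div_mul_div_comm, one_mul, Real.mul_self_sqrt hNR.le]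
    rw [this]
    push_cast
    field_simp
    rw [nsmul_eq_mul]; field_simp
  apply Polynomial.eq_of_infinite_eval_eq
  have hfin : Set.Finite ({1, 1 - sC} : Set ℂ) := (Set.finite_singleton _).insert _
  apply Set.Infinite.mono (s := ({1, 1 - sC} : Set ℂ)ᶜ) ?_ hfin.infinite_compl
  intro x hx
  simp only [Set.mem_compl_iff, Set.mem_insert_iff, Set.mem_singleton_iff, not_or] at hx
  obtain ⟨hx1, hx2⟩ := hx
  have hα : x - 1 ≠ 0 := sub_ne_zero.2 hx1
  have hαs : x - 1 + sC ≠ 0 := by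
    intro h; apply hx2; linear_combination h
  simp only [Set.mem_setOf_eq]
  -- LHS
  rw [aux_eval_charpoly]
  set A : Matrix (Fin N) (Fin N) ℂ := (x - 1) • 1 + sC • PM with hA
  have hsplit : x • (1 : Matrix (Fin N) (Fin N) ℂ) -
      ((1 - sC) • ((1 : Matrix (Fin N) (Fin N) ℂ) - vecMulVec u (star u)) +
        sC • ((1 : Matrix (Fin N) (Fin N) ℂ) - PM))
      = A + vecMulVec ((1 - sC) • u) (star u) := by
    have hvv : vecMulVec ((1 - sC) • u) (star u) = (1 - sC) • vecMulVec u (star u) := by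
      ext i j; simp [vecMulVec]; ring
    rw [hA, hvv]
    module
  rw [hsplit]
  have hdetA : A.det = (x - 1) ^ (N - M) * (x - 1 + sC) ^ M := by
    rw [hA, aux_det_proj PM hPM_herm hPM_proj hPM_rank]
  have hAunit : IsUnit A.det := by
    rw [hdetA]
    exact (isUnit_iff_ne_zero).2 (mul_ne_zero (pow_ne_zero _ hα) (pow_ne_zero _ hαs))
  have hAinv : A⁻¹ = (x - 1)⁻¹ • ((1 : Matrix (Fin N) (Fin N) ℂ) - PM)
      + (x - 1 + sC)⁻¹ • PM := by
    apply Matrix.inv_eq_right_inv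
    rw [hA]
    simp only [Matrix.add_mul, Matrix.mul_add, Matrix.smul_mul, Matrix.mul_smul,
      Matrix.mul_sub, Matrix.sub_mul, Matrix.one_mul, Matrix.mul_one, hPM_proj,
      smul_smul, sub_self, smul_zero, add_zero, smul_sub]
    match_scalars <;> field_simp <;> ring
  rw [vecMulVec_eq Unit, Matrix.det_add_replicateCol_mul_replicateRow hAunit]
  have hdot : (1 + replicateRow Unit (star u) * A⁻¹ * replicateCol Unit ((1 - sC) • u)).det
      = 1 + star u ⬝ᵥ (A⁻¹ *ᵥ ((1 - sC) • u)) := by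
    rw [det_unique]
    simp only [Matrix.add_apply, Matrix.one_apply_eq]
    congr 1
    simp only [Matrix.mul_apply, Matrix.replicateCol_apply, Matrix.replicateRow_apply, dotProduct,
      Matrix.mulVec, Finset.mul_sum, Finset.sum_mul, mul_assoc,
      Finset.univ_unique, Finset.sum_singleton]
    rw [Finset.sum_comm]
  rw [hdot, hAinv, hdetA]
  have hdot2 : star u ⬝ᵥ (((x - 1)⁻¹ • ((1 : Matrix (Fin N) (Fin N) ℂ) - PM)
        + (x - 1 + sC)⁻¹ • PM) *ᵥ ((1 - sC) • u))
      = (1 - sC) * ((x - 1)⁻¹ * (1 - μ) + (x - 1 + sC)⁻¹ * μ) := by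
    simp only [Matrix.add_mulVec, Matrix.smul_mulVec, Matrix.sub_mulVec,
      Matrix.one_mulVec, Matrix.mulVec_smul, dotProduct_add, dotProduct_smul,
      dotProduct_sub, huu, hoverlap, smul_eq_mul, smul_sub]
    ring
  rw [hdot2]
  -- RHS evaluation
  simp only [Polynomial.eval_mul, Polynomial.eval_pow, Polynomial.eval_sub,
    Polynomial.eval_X, Polynomial.eval_C, Polynomial.eval_one, Complex.ofReal_sub,
    Complex.ofReal_one]
  have hq : (x - (aR:ℂ)) * (x - (bR:ℂ)) = x^2 - x + (1 - μ) * sC * (1 - sC) := by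
    linear_combination (-x) * hsumC + hprodC
  rw [hq]
  have hp1 : (x - 1) ^ (N - M) = (x - 1) ^ (N - M - 1) * (x - 1) := by
    rw [← pow_succ]; congr 1; omega
  have hp2 : (x - 1 + sC) ^ M = (x - 1 + sC) ^ (M - 1) * (x - 1 + sC) := by
    rw [← pow_succ]; congr 1; omega
  have hx3 : x - (1 - sC) = x - 1 + sC := by ring
  rw [hp1, hp2, hx3]
  field_simp
  ring
end
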